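/- A matroid M is uniformly dense if and only if its dual matroid M* is uniformly dense. -/

import Mathlib

open Finset

variable {α : Type*} [DecidableEq α]

/-- A collection of bases of a (loopful-permitting) matroid on ground set `E`:
nonempty, contained in `E`, and satisfying the base-exchange axiom. -/
def isBaseFamily (E : Finset α) (Bs : Finset (Finset α)) : Prop :=
  Bs.Nonempty ∧ (∀ B ∈ Bs, B ⊆ E) ∧
    ∀ A ∈ Bs, ∀ B ∈ Bs, ∀ a ∈ A \ B, ∃ b ∈ B \ A, insert b (A.erase a) ∈ Bs

/-- The rank of a subset `A`: the largest intersection of `A` with a basis. -/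
def rk (Bs : Finset (Finset α)) (A : Finset α) : ℕ :=
  Bs.sup fun B => (B ∩ A).card

/-- Every element of the ground set lies in some basis. -/
def loopless (E : Finset α) (Bs : Finset (Finset α)) : Prop :=
  ∀ e ∈ E, ∃ B ∈ Bs, e ∈ B

/-- Uniformly dense: `ρ(A) ≤ ρ(E)` for all nonempty `A ⊆ E`, in cross-multiplied form. -/
def uniformlyDense (E : Finset α) (Bs : Finset (Finset α)) : Prop :=
  ∀ A ⊆ E, A.Nonempty → (A.card : ℝ) * (rk Bs E : ℝ) ≤ (E.card : ℝ) * (rk Bs A : ℝ)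

/-- All bases of a base family have the same cardinality. -/
lemma baseFamily_card_eq {E : Finset α} {Bs : Finset (Finset α)}
    (hM : isBaseFamily E Bs) : ∀ A ∈ Bs, ∀ B ∈ Bs, A.card = B.card := by
  obtain ⟨-, -, hex⟩ := hM
  intro A hA B hB
  suffices h : ∀ n A, A ∈ Bs → (A \ B).card = n → A.card = B.card from h _ A hA rfl
  intro n
  induction n using Nat.strong_induction_on with
  | _ n ih =>
    intro A hA hcard
    rcases Nat.eq_zero_or_pos n with h0 | hpos
    · subst h0
      have hempty : A \ B = ∅ := card_eq_zero.mp hcard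
      have hAB : A ⊆ B := sdiff_eq_empty_iff_subset.mp hempty
      by_cases hEq : A = B
      · rw [hEq]
      · have hne : (B \ A).Nonempty := by
          rw [sdiff_nonempty]
          intro hBA; exact hEq (subset_antisymm hAB hBA)
        obtain ⟨a, ha⟩ := hne
        obtain ⟨b, hb, -⟩ := hex B hB A hA a ha
        rw [hempty] at hb
        exact absurd hb (notMem_empty b)
    · have hne : (A \ B).Nonempty := by
        rw [← card_pos, hcard]; exact hpos
      obtain ⟨a, ha⟩ := hne
      obtain ⟨haA, haB⟩ := mem_sdiff.mp ha
      obtain ⟨b, hb, hA'⟩ := hex A hA B hB a ha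
      obtain ⟨hbB, hbA⟩ := mem_sdiff.mp hb
      set A' := insert b (A.erase a) with hA'def
      have hbNot : b ∉ A.erase a := fun h => hbA (mem_of_mem_erase h)
      have hcardA' : A'.card = A.card := by
        rw [hA'def, card_insert_of_notMem hbNot, card_erase_of_mem haA]
        have : 1 ≤ A.card := card_pos.mpr ⟨a, haA⟩
        omega
      have hsd : A' \ B = (A \ B).erase a := by
        ext x
        simp only [hA'def, mem_sdiff, mem_insert, mem_erase]
        constructor
        · rintro ⟨hx | ⟨hxa, hxA⟩, hxB⟩
          · exact absurd (hx ▸ hbB) hxB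
          · exact ⟨hxa, hxA, hxB⟩
        · rintro ⟨hxa, hxA, hxB⟩
          exact ⟨Or.inr ⟨hxa, hxA⟩, hxB⟩
      have hlt : (A' \ B).card < n := by
        rw [hsd, card_erase_of_mem ha, hcard]; omega
      have := ih _ hlt A' hA' rfl
      omega

/-- The rank of the ground set equals the size of any base. -/
lemma rk_ground {E : Finset α} {Bs : Finset (Finset α)}
    (hM : isBaseFamily E Bs) {B : Finset α} (hB : B ∈ Bs) : rk Bs E = B.card := by
  have hsub := hM.2.1
  apply le_antisymm
  · apply Finset.sup_le
    intro B' hB'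
    rw [inter_eq_left.mpr (hsub B' hB')]
    exact le_of_eq (baseFamily_card_eq hM B' hB' B hB)
  · have h : (B ∩ E).card ≤ rk Bs E := Finset.le_sup (f := fun B => (B ∩ E).card) hB
    rwa [inter_eq_left.mpr (hsub B hB)] at h

lemma rk_empty (Bs : Finset (Finset α)) : rk Bs (⊥ : Finset α) = 0 := by
  simp [rk]

/-- Dual rank formula. -/
lemma rk_dual {E : Finset α} {Bs : Finset (Finset α)}
    (hM : isBaseFamily E Bs) {A : Finset α} (hA : A ⊆ E) :
    rk (Bs.image fun B => E \ B) A + rk Bs E = A.card + rk Bs (E \ A) := by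
  have hsub := hM.2.1
  -- per-base identity
  have key : ∀ B ∈ Bs, ((E \ B) ∩ A).card + B.card = A.card + (B ∩ (E \ A)).card := by
    intro B hB
    have h1 : (E \ B) ∩ A = A \ B := by
      ext x
      simp only [mem_inter, mem_sdiff]
      exact ⟨fun ⟨⟨_, h2⟩, h3⟩ => ⟨h3, h2⟩, fun ⟨h1, h2⟩ => ⟨⟨hA h1, h2⟩, h1⟩⟩
    have h2 : B ∩ (E \ A) = B \ A := by
      ext x
      simp only [mem_inter, mem_sdiff]
      exact ⟨fun ⟨h1, _, h3⟩ => ⟨h1, h3⟩, fun ⟨h1, h2⟩ => ⟨h1, hsub B hB h1, h2⟩⟩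
    rw [h1, h2]
    have e1 : (A \ B).card + B.card = (A ∪ B).card := card_sdiff_add_card A B
    have e2 : (B \ A).card + A.card = (B ∪ A).card := card_sdiff_add_card B A
    rw [union_comm B A] at e2
    omega
  apply le_antisymm
  · obtain ⟨C, hC, hCeq⟩ := Finset.exists_mem_eq_sup (Bs.image fun B => E \ B)
      ((hM.1).image _) (fun C => (C ∩ A).card)
    obtain ⟨B, hB, rfl⟩ := mem_image.mp hC
    rw [rk, hCeq, rk_ground hM hB, key B hB]
    exact add_le_add_right (Finset.le_sup (f := fun B => (B ∩ (E \ A)).card) hB) _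
  · obtain ⟨B, hB, hBeq⟩ := Finset.exists_mem_eq_sup Bs hM.1 (fun B => (B ∩ (E \ A)).card)
    have hrk : rk Bs (E \ A) = (B ∩ (E \ A)).card := hBeq
    have hle : ((E \ B) ∩ A).card ≤ rk (Bs.image fun B => E \ B) A :=
      Finset.le_sup (f := fun C => (C ∩ A).card) (mem_image_of_mem _ hB)
    have hg : rk Bs E = B.card := rk_ground hM hB
    have hk := key B hB
    omega

lemma nat_calc1 (a n r s t u c : ℕ) (h1 : t + r = a + s) (h2 : u + r = n) (h3 : c + a = n)
    (h4 : c * r ≤ n * s) : a * u ≤ n * t := by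
  have key : a * u + (n * r + a * r) ≤ n * t + (n * r + a * r) := by
    calc a * u + (n * r + a * r) = a * (u + r) + n * r := by ring
      _ = a * n + n * r := by rw [h2]
      _ = a * n + c * r + a * r := by rw [← h3]; ring
      _ ≤ a * n + n * s + a * r := add_le_add_left (add_le_add_right h4 (a * n)) (a * r)
      _ = n * (a + s) + a * r := by ring
      _ = n * (t + r) + a * r := by rw [h1]
      _ = n * t + (n * r + a * r) := by ring
  exact Nat.le_of_add_le_add_right key

lemma nat_calc2 (a n r q t u c : ℕ) (h1 : t + r = c + q) (h2 : u + r = n) (h3 : c + a = n)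
    (h4 : c * u ≤ n * t) : a * r ≤ n * q := by
  have key : a * r + (c * r + c * u) ≤ n * q + (c * r + c * u) := by
    calc a * r + (c * r + c * u) = (a + c) * r + c * u := by ring
      _ = n * r + c * u := by rw [show a + c = n by omega]
      _ ≤ n * r + n * t := add_le_add_right h4 (n * r)
      _ = n * (t + r) := by ring
      _ = n * (c + q) := by rw [h1]
      _ = (u + r) * c + n * q := by rw [h2]; ring
      _ = n * q + (c * r + c * u) := by ring
  exact Nat.le_of_add_le_add_right key

/-- A matroid is uniformly dense iff its dual matroid is uniformly dense. -/
theorem uniformlyDense_iff_dual (E : Finset α) (Bs : Finset (Finset α))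
    (hM : isBaseFamily E Bs) :
    uniformlyDense E Bs ↔ uniformlyDense E (Bs.image fun B => E \ B) := by
  constructor
  · intro h A hAE hAne
    by_cases hEq : A = E
    · subst hEq; exact le_of_eq (by ring)
    · have hCne : (E \ A).Nonempty := by
        rw [sdiff_nonempty]; intro hEA; exact hEq (subset_antisymm hAE hEA)
      have hprim := h (E \ A) sdiff_subset hCne
      have hprimN : (E \ A).card * rk Bs E ≤ E.card * rk Bs (E \ A) := by
        exact_mod_cast hprim
      have h1 := rk_dual hM hAE
      have h2 := rk_dual hM (Finset.Subset.refl E)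
      rw [sdiff_self, rk_empty, add_zero] at h2
      have h3 : (E \ A).card + A.card = E.card := by
        rw [card_sdiff_of_subset hAE]
        have := card_le_card hAE
        omega
      have := nat_calc1 A.card E.card (rk Bs E) (rk Bs (E \ A))
        (rk (Bs.image fun B => E \ B) A) (rk (Bs.image fun B => E \ B) E)
        (E \ A).card h1 h2 h3 hprimN
      exact_mod_cast this
  · intro h A hAE hAne
    by_cases hEq : A = E
    · subst hEq; exact le_of_eq (by ring)
    · have hCne : (E \ A).Nonempty := by
        rw [sdiff_nonempty]; intro hEA; exact hEq (subset_antisymm hAE hEA)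
      have hdual := h (E \ A) sdiff_subset hCne
      have hdualN : (E \ A).card * rk (Bs.image fun B => E \ B) E
          ≤ E.card * rk (Bs.image fun B => E \ B) (E \ A) := by
        exact_mod_cast hdual
      have h1 := rk_dual hM (sdiff_subset : E \ A ⊆ E)
      have hEA : E \ (E \ A) = A := by
        rw [sdiff_sdiff_right_self, inf_eq_inter, inter_eq_right.mpr hAE]
      rw [hEA] at h1
      have h2 := rk_dual hM (Finset.Subset.refl E)
      rw [sdiff_self, rk_empty, add_zero] at h2
      have h3 : (E \ A).card + A.card = E.card := by
        rw [card_sdiff_of_subset hAE]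
        have := card_le_card hAE
        omega
      have := nat_calc2 A.card E.card (rk Bs E) (rk Bs A)
        (rk (Bs.image fun B => E \ B) (E \ A)) (rk (Bs.image fun B => E \ B) E)
        (E \ A).card h1 h2 h3 hdualN
      exact_mod_cast this
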